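/- Fix 0 < p < 1. Let E : ℕ → ℝ satisfy E(0) = 0 and, for all n ≥ 1, E(n) = 1 + p·E(n−1) + ((1−p)/n)·Σ_{k=1}^{n} E(k−1). Then for all n ≥ 1, E(n) = Σ_{k=1}^{n} (1 − p^k)/(k·(1−p)). -/

import Mathlib

open Finset

theorem stmt_2 (p : ℝ) (hp0 : 0 < p) (hp1 : p < 1) (E : ℕ → ℝ) (hE0 : E 0 = 0)
    (hrec : ∀ n : ℕ, 1 ≤ n →
      E n = 1 + p * E (n - 1) + ((1 - p) / (n : ℝ)) * ∑ k ∈ Finset.Icc 1 n, E (k - 1)) :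
    ∀ n : ℕ, 1 ≤ n →
      E n = ∑ k ∈ Finset.Icc 1 n, (1 - p ^ k) / ((k : ℝ) * (1 - p)) := by
  have hne : (1 : ℝ) - p ≠ 0 := by linarith
  set F : ℕ → ℝ := fun n => ∑ k ∈ Finset.Icc 1 n, (1 - p ^ k) / ((k : ℝ) * (1 - p)) with hFdef
  have hF : ∀ n : ℕ, F n = ∑ k ∈ Finset.Icc 1 n, (1 - p ^ k) / ((k : ℝ) * (1 - p)) :=
    fun n => rfl
  have hF0 : F 0 = 0 := by simp [hF]
  have hFsucc : ∀ m : ℕ, F (m + 1) = F m + (1 - p ^ (m+1)) / (((m:ℝ)+1) * (1 - p)) := by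
    intro m
    rw [hF, hF, Finset.sum_Icc_succ_top (by omega)]
    push_cast
    ring
  have hka : ∀ m : ℕ, (((m:ℝ))+1) * ((1 - p ^ (m+1)) / (((m:ℝ)+1) * (1 - p)))
      = (1 - p ^ (m+1)) / (1 - p) := by
    intro m
    have h0 : ((m:ℝ)) + 1 ≠ 0 := by positivity
    field_simp
  have key : ∀ m : ℕ, ((m:ℝ) + 1) * F (m+1)
      = ((m:ℝ) + 1) + p * ((m:ℝ) + 1) * F m
        + (1 - p) * ∑ k ∈ Finset.Icc 1 (m+1), F (k - 1) := by
    intro m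
    induction m with
    | zero =>
      simp only [Finset.Icc_self, Finset.sum_singleton, Nat.cast_zero]
      rw [hFsucc 0, hF0]
      simp
      field_simp
      exact hne
    | succ m ih =>
      have hsum : ∑ k ∈ Finset.Icc 1 (m+2), F (k - 1)
          = (∑ k ∈ Finset.Icc 1 (m+1), F (k - 1)) + F (m+1) := by
        rw [Finset.sum_Icc_succ_top (by omega)]
        norm_num
      have hB : ((m:ℝ) + 2) * ((1 - p ^ (m+2)) / (((m:ℝ)+2) * (1 - p)))
          = 1 + p * (((m:ℝ)) + 1) * ((1 - p ^ (m+1)) / (((m:ℝ)+1) * (1 - p))) := by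
        have h1 : ((m:ℝ)) + 1 ≠ 0 := by positivity
        have h2 : ((m:ℝ)) + 2 ≠ 0 := by positivity
        field_simp
        ring
      have h2 := hFsucc (m+1)
      have h1 := hFsucc m
      push_cast at h2 h1 ⊢
      rw [hsum, h2, h1]
      rw [h1] at ih
      linear_combination ih + hB
  have main : ∀ n : ℕ, E n = F n := by
    intro n
    induction n using Nat.strong_induction_on with
    | _ n ih =>
      match n with
      | 0 => rw [hE0, hF0]
      | (m+1) =>
        have h := hrec (m+1) (by omega)
        have hs : ∑ k ∈ Finset.Icc 1 (m+1), E (k-1) = ∑ k ∈ Finset.Icc 1 (m+1), F (k-1) := by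
          refine Finset.sum_congr rfl fun k hk => ?_
          simp only [Finset.mem_Icc] at hk
          exact ih (k-1) (by omega)
        rw [hs] at h
        have hm : E (m+1-1) = F m := by
          simpa using ih m (by omega)
        rw [hm] at h
        rw [h]
        have hk := key m
        have h0 : ((m:ℝ)) + 1 ≠ 0 := by positivity
        have hcast : ((m+1 : ℕ) : ℝ) = (m:ℝ) + 1 := by push_cast; ring
        rw [hcast]
        have hdiv : (1 - p) / ((m:ℝ) + 1) * ∑ k ∈ Finset.Icc 1 (m+1), F (k-1)
            = F (m+1) - 1 - p * F m := by
          rw [div_mul_eq_mul_div, div_eq_iff h0]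
          linear_combination -hk
        rw [hdiv]
        ring
  intro n hn
  rw [main n, hF]
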